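/- arXiv:1508.05033 — 4 statements merged into one kernel-verified Lean document; each statement's English description precedes it below -/
import Mathlib

section
/- Let Γ be a group with a finite generating set and word metric d. The cocycle b : Γ → ℓ^∞(Γ), b(g) = (h ↦ d(g,h) − d(e,h)), is proper: ‖b(g)‖_∞ = d(e,g), hence ‖b(g)‖_∞ → ∞ as d(e,g) → ∞. Consequently, every finitely generated group admits a proper isometric affine action on ℓ^∞(Γ) (property PL^∞). -/
open scoped ENNReal

/-- `dist` on `Γ` is the word metric associated with the finite generating set `S`. -/
def IsWordMetric {Γ : Type*} [Group Γ] [MetricSpace Γ] (S : Set Γ) : Prop :=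
  S.Finite ∧ Subgroup.closure S = ⊤ ∧
    ∀ g h : Γ, dist g h = sInf {t : ℝ | ∃ w : List Γ,
      (w.length : ℝ) = t ∧ (∀ x ∈ w, x ∈ S ∨ x⁻¹ ∈ S) ∧ g⁻¹ * h = w.prod}

section Aux

variable {Γ : Type*} [Group Γ]

/-- The set of lengths of words over `S ∪ S⁻¹` representing `x`. -/
def wordSet (S : Set Γ) (x : Γ) : Set ℕ :=
  {n | ∃ w : List Γ, w.length = n ∧ (∀ a ∈ w, a ∈ S ∨ a⁻¹ ∈ S) ∧ x = w.prod}

lemma wordSet_nonempty {S : Set Γ} (hgen : Subgroup.closure S = ⊤) (x : Γ) :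
    (wordSet S x).Nonempty := by
  have hx : x ∈ (Subgroup.closure S).toSubmonoid := by
    rw [hgen]; trivial
  rw [Subgroup.closure_toSubmonoid] at hx
  obtain ⟨l, hl, hprod⟩ := Submonoid.exists_list_of_mem_closure hx
  refine ⟨l.length, l, rfl, fun a ha => ?_, hprod.symm⟩
  rcases hl a ha with h | h
  · exact Or.inl h
  · exact Or.inr (Set.mem_inv.mp h)

variable [MetricSpace Γ]

lemma dist_eq_wordLength {S : Set Γ} (hS : IsWordMetric S) (g h : Γ) :
    dist g h = ((sInf (wordSet S (g⁻¹ * h)) : ℕ) : ℝ) := by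
  rw [hS.2.2 g h]
  have himg : {t : ℝ | ∃ w : List Γ,
      (w.length : ℝ) = t ∧ (∀ x ∈ w, x ∈ S ∨ x⁻¹ ∈ S) ∧ g⁻¹ * h = w.prod}
      = Nat.cast '' wordSet S (g⁻¹ * h) := by
    ext t
    constructor
    · rintro ⟨w, rfl, hw, hprod⟩
      exact ⟨w.length, ⟨w, rfl, hw, hprod⟩, rfl⟩
    · rintro ⟨n, ⟨w, rfl, hw, hprod⟩, rfl⟩
      exact ⟨w, rfl, hw, hprod⟩
  rw [himg]
  have hne := wordSet_nonempty hS.2.1 (g⁻¹ * h)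
  apply le_antisymm
  · exact csInf_le ⟨0, by rintro _ ⟨n, _, rfl⟩; positivity⟩
      ⟨_, Nat.sInf_mem hne, rfl⟩
  · refine le_csInf (hne.image _) ?_
    rintro _ ⟨n, hn, rfl⟩
    exact_mod_cast Nat.sInf_le hn

lemma dist_left_invariant {S : Set Γ} (hS : IsWordMetric S) (k g h : Γ) :
    dist (k * g) (k * h) = dist g h := by
  rw [dist_eq_wordLength hS, dist_eq_wordLength hS]
  have : (k * g)⁻¹ * (k * h) = g⁻¹ * h := by group
  rw [this]

lemma finite_short_products {S : Set Γ} (hfin : S.Finite) (n : ℕ) :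
    {x : Γ | ∃ w : List Γ, w.length ≤ n ∧ (∀ a ∈ w, a ∈ S ∨ a⁻¹ ∈ S) ∧ x = w.prod}.Finite := by
  induction n with
  | zero =>
    refine (Set.finite_singleton (1 : Γ)).subset ?_
    rintro x ⟨w, hlen, -, rfl⟩
    interval_cases h : w.length
    · simp [List.length_eq_zero_iff.mp h]
  | succ n ih =>
    have hT : (S ∪ S⁻¹ : Set Γ).Finite := hfin.union hfin.inv
    refine ((hT.image2 (· * ·) ih).union ih).subset ?_
    rintro x ⟨w, hlen, hw, rfl⟩
    cases w with
    | nil => exact Or.inr ⟨[], by simp⟩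
    | cons a t =>
      left
      refine ⟨a, ?_, t.prod, ⟨t, ?_, fun b hb => hw b (List.mem_cons_of_mem a hb), rfl⟩, by simp⟩
      · rcases hw a List.mem_cons_self with h | h
        · exact Or.inl h
        · exact Or.inr (Set.mem_inv.mpr h)
      · simpa using Nat.lt_succ_iff.mp (Nat.lt_of_lt_of_le (by simp) hlen)

end Aux

/-- The cocycle b(g) = (h ↦ d(g,h) − d(e,h)) for the left regular representation on ℓ^∞(Γ)
is proper: ‖b(g)‖_∞ = d(e,g); consequently every finitely generated group admits a proper
isometric affine action on ℓ^∞(Γ), i.e. has property PL^∞. -/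
theorem stmt2 {Γ : Type*} [Group Γ] [MetricSpace Γ] (S : Set Γ) (hS : IsWordMetric S) :
    ∃ b : Γ → lp (fun _ : Γ => ℝ) ∞,
      (∀ g h : Γ, (b g : ∀ _ : Γ, ℝ) h = dist g h - dist (1 : Γ) h) ∧
      (∀ g h k : Γ, (b (g * h) : ∀ _ : Γ, ℝ) k
        = (b h : ∀ _ : Γ, ℝ) (g⁻¹ * k) + (b g : ∀ _ : Γ, ℝ) k) ∧
      (∀ g : Γ, ‖b g‖ = dist (1 : Γ) g) ∧
      Filter.Tendsto (fun g : Γ => ‖b g‖) Filter.cofinite Filter.atTop := by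
  have hbdd : ∀ g h : Γ, |dist g h - dist (1 : Γ) h| ≤ dist (1 : Γ) g := by
    intro g h
    have := abs_dist_sub_le g (1 : Γ) h
    rwa [dist_comm g 1] at this
  have hmem : ∀ g : Γ, Memℓp (fun h : Γ => dist g h - dist (1 : Γ) h) ∞ := by
    intro g
    apply memℓp_infty
    refine ⟨dist (1 : Γ) g, ?_⟩
    rintro _ ⟨h, rfl⟩
    simpa [Real.norm_eq_abs] using hbdd g h
  set b : Γ → lp (fun _ : Γ => ℝ) ∞ := fun g => ⟨fun h => dist g h - dist (1 : Γ) h, hmem g⟩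
    with hb
  have happly : ∀ g h : Γ, (b g : ∀ _ : Γ, ℝ) h = dist g h - dist (1 : Γ) h := fun g h => rfl
  have hnorm : ∀ g : Γ, ‖b g‖ = dist (1 : Γ) g := by
    intro g
    apply le_antisymm
    · rw [lp.norm_eq_ciSup]
      exact ciSup_le fun h => by simpa [happly, Real.norm_eq_abs] using hbdd g h
    · have h1 : dist (1 : Γ) g = ‖(b g : ∀ _ : Γ, ℝ) g‖ := by
        simp [happly, Real.norm_eq_abs, abs_of_nonneg dist_nonneg]
      rw [h1]
      exact lp.norm_apply_le_norm ENNReal.top_ne_zero (b g) g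
  refine ⟨b, happly, ?_, hnorm, ?_⟩
  · intro g h k
    rw [happly, happly, happly]
    have e1 : dist (g * h) k = dist h (g⁻¹ * k) := by
      have := dist_left_invariant hS g h (g⁻¹ * k)
      rwa [mul_inv_cancel_left] at this
    have e2 : dist (1 : Γ) (g⁻¹ * k) = dist g k := by
      have := dist_left_invariant hS g 1 (g⁻¹ * k)
      rw [mul_one, mul_inv_cancel_left] at this
      exact this.symm
    rw [e1, e2]
    ring
  · rw [Filter.tendsto_atTop]
    intro C
    rw [Filter.eventually_cofinite]
    have hsub : {g : Γ | ¬ C ≤ ‖b g‖} ⊆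
        {x : Γ | ∃ w : List Γ, w.length ≤ ⌈C⌉₊ ∧ (∀ a ∈ w, a ∈ S ∨ a⁻¹ ∈ S) ∧ x = w.prod} := by
      intro g hg
      simp only [Set.mem_setOf_eq, not_le] at hg
      rw [hnorm] at hg
      have hdist : dist (1 : Γ) g = ((sInf (wordSet S g) : ℕ) : ℝ) := by
        have := dist_eq_wordLength hS (1 : Γ) g
        rwa [inv_one, one_mul] at this
      rw [hdist] at hg
      have hle : sInf (wordSet S g) ≤ ⌈C⌉₊ := by
        have : ((sInf (wordSet S g) : ℕ) : ℝ) ≤ (⌈C⌉₊ : ℝ) := hg.le.trans (Nat.le_ceil C)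
        exact_mod_cast this
      obtain ⟨w, hlen, hw, hprod⟩ := Nat.sInf_mem (wordSet_nonempty hS.2.1 g)
      exact ⟨w, hlen.le.trans hle, hw, hprod⟩
    exact (finite_short_products hS.1 ⌈C⌉₊).subset hsub
end

section
/- In the setting of the fibred-coarse-embedding construction: fix r, a finite quotient X = Γ/Γ_{n_r} contained in X∖K_r with quotient map r-isometric, and for z ∈ X let C_z be the r-ball around z. Define c^z(x) = t_{C_z}(z)(s(z)) − t_{C_z}(zx)(s(zx)) for d(e,x) < r and c^z(x) = 0 otherwise, and let ρ_{C_z C_{zy}} be the linear part of the affine isometry t_{C_z C_{zy}}. Then for all x, y with d(e,x) < r, d(e,y) < r, and d(e,yx) < r, and all z ∈ X: ρ_{C_z C_{zy}}(c^{zy}(x)) + c^z(y) = c^z(yx). -/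
/-- The local cocycle identity for the vectors
`c^z(x) = t_{C_z}(z)(s(z)) − t_{C_z}(zx)(s(zx))` built from the trivializations of a
fibred coarse embedding: if `d(e,x), d(e,y), d(e,yx) < r` then
`ρ_{C_z C_{zy}}(c^{zy}(x)) + c^z(y) = c^z(yx)`, where `ρ_{C_z C_{zy}}` is the linear part
of the transition affine isometry `t_{C_z C_{zy}}`.

Here `X` is a group with a left-invariant metric (a finite quotient of Γ in the paper),
`C_z` is the `r`-ball around `z`, `t z w` is the trivialization `t_{C_z}(w) : B_w → B`
(fibres realized as `B`), and `T z z'` is the transition isometry `t_{C_z C_{z'}}`,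
characterized by `t_{C_z}(w) ∘ t_{C_{z'}}(w)⁻¹ = T z z'` for `w ∈ C_z ∩ C_{z'}`. -/
theorem stmt15 {X : Type*} [Group X] [MetricSpace X]
    (hinv : ∀ g x y : X, dist (g * x) (g * y) = dist x y)
    {B : Type*} [NormedAddCommGroup B] [NormedSpace ℝ B]
    (r : ℝ) (s : X → B)
    (t : X → X → (B ≃ᵃⁱ[ℝ] B)) (T : X → X → (B ≃ᵃⁱ[ℝ] B))
    (hT : ∀ z z' w : X, w ∈ Metric.ball z r ∩ Metric.ball z' r →
      ∀ v : B, t z w ((t z' w).symm v) = T z z' v)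
    (c : X → X → B)
    (hc : ∀ z x : X, c z x =
      if dist (1 : X) x < r then t z z (s z) - t z (z * x) (s (z * x)) else 0) :
    ∀ x y : X, dist (1 : X) x < r → dist (1 : X) y < r → dist (1 : X) (y * x) < r →
      ∀ z : X, (T z (z * y)).linearIsometryEquiv (c (z * y) x) + c z y = c z (y * x) := by
  intro x y hx hy hyx z
  have hr0 : (0:ℝ) < r := lt_of_le_of_lt dist_nonneg hx
  have hzy : z * y ∈ Metric.ball z r ∩ Metric.ball (z * y) r := by
    refine ⟨?_, by simpa [Metric.mem_ball] using hr0⟩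
    have : dist (z * y) z = dist 1 y := by
      rw [dist_comm, ← hinv z 1 y, mul_one]
    simpa [Metric.mem_ball, this] using hy
  have hzyx : z * y * x ∈ Metric.ball z r ∩ Metric.ball (z * y) r := by
    constructor
    · have : dist (z * y * x) z = dist 1 (y * x) := by
        rw [dist_comm, ← hinv z 1 (y * x), mul_one, mul_assoc]
      simpa [Metric.mem_ball, this] using hyx
    · have : dist (z * y * x) (z * y) = dist 1 x := by
        rw [dist_comm, ← hinv (z * y) 1 x, mul_one]
      simpa [Metric.mem_ball, this] using hx
  have key : ∀ w : X, w ∈ Metric.ball z r ∩ Metric.ball (z * y) r →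
      T z (z * y) (t (z * y) w (s w)) = t z w (s w) := by
    intro w hw
    rw [← hT z (z * y) w hw (t (z * y) w (s w))]
    simp
  rw [hc, hc, hc, if_pos hx, if_pos hy, if_pos hyx]
  have hmap := (T z (z * y)).map_vsub (t (z * y) (z * y) (s (z * y)))
    (t (z * y) (z * y * x) (s (z * y * x)))
  simp only [vsub_eq_sub] at hmap
  rw [hmap, key _ hzy, key _ hzyx, mul_assoc]
  abel
end

section
/- Let Γ be a finitely generated group, B a Banach space, and suppose for every r ∈ ℕ* there is an r-locally isometric affine action α_r(g)· = σ_r(g)· + b_r(g) of Γ on a Banach space B_r together with non-decreasing functions ρ₁, ρ₂ → ∞ (independent of r) such that ρ₁(d(e,g)) ≤ ‖b_r(g)‖ ≤ ρ₂(d(e,g)) whenever d(e,g) < r. Then Γ admits a proper isometric affine action on the ultraproduct B_𝒰 of (B_r) with respect to any non-principal ultrafilter 𝒰 on ℕ*: the cocycle b(g) = [(b_r(g))] satisfies ρ₁(d(e,g)) ≤ ‖b(g)‖_{B_𝒰} for all g ∈ Γ. -/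
open Filter

/-- An `r`-locally isometric affine action of `Γ` on `B`. -/
structure RLocalIsomAffAction (Γ : Type*) [Group Γ] [MetricSpace Γ] (r : ℝ)
    (B : Type*) [NormedAddCommGroup B] [NormedSpace ℝ B] where
  π : Γ → B → B
  b : Γ → B
  isom : ∀ g : Γ, dist (1 : Γ) g < r → Isometry (π g)
  bij : ∀ g : Γ, dist (1 : Γ) g < r → Function.Bijective (π g)
  map_add : ∀ g : Γ, dist (1 : Γ) g < r → ∀ u v : B, π g (u + v) = π g u + π g v
  map_smul : ∀ g : Γ, dist (1 : Γ) g < r → ∀ (c : ℝ) (v : B), π g (c • v) = c • π g v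
  mul : ∀ g h : Γ, dist (1 : Γ) g < r → dist (1 : Γ) h < r → dist (1 : Γ) (g * h) < r →
    ∀ v : B, π (g * h) v = π g (π h v)
  cocycle : ∀ g h : Γ, dist (1 : Γ) g < r → dist (1 : Γ) h < r →
    dist (1 : Γ) (g * h) < r → b (g * h) = π g (b h) + b g

/-- The submodule of bounded sequences `(a_r)` with `a_r ∈ B_r`. -/
def boundedSeqs (B : ℕ → Type*) [∀ r, NormedAddCommGroup (B r)]
    [∀ r, NormedSpace ℝ (B r)] : Submodule ℝ (∀ r, B r) where
  carrier := {a | ∃ K : ℝ, ∀ r, ‖a r‖ ≤ K}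
  add_mem' := by
    rintro a b ⟨K, hK⟩ ⟨L, hL⟩
    exact ⟨K + L, fun r => (norm_add_le _ _).trans (add_le_add (hK r) (hL r))⟩
  zero_mem' := ⟨0, fun r => by simp⟩
  smul_mem' := by
    rintro c a ⟨K, hK⟩
    refine ⟨‖c‖ * K, fun r => ?_⟩
    rw [Pi.smul_apply, norm_smul]
    exact mul_le_mul_of_nonneg_left (hK r) (norm_nonneg c)

/-- `q : ℓ^∞(ℕ, (B_r)) → V` realizes `V` as the ultraproduct of `(B_r)` along `𝒰`. -/
def IsUltraproductQuotient (B : ℕ → Type*) [∀ r, NormedAddCommGroup (B r)]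
    [∀ r, NormedSpace ℝ (B r)] (𝒰 : Ultrafilter ℕ)
    (V : Type*) [NormedAddCommGroup V] [NormedSpace ℝ V]
    (q : boundedSeqs B →ₗ[ℝ] V) : Prop :=
  Function.Surjective q ∧
    ∀ a : boundedSeqs B, Tendsto (fun r => ‖a.1 r‖) (𝒰 : Filter ℕ) (nhds ‖q a‖)


lemma stmt16_prodSet_finite {Γ : Type*} [Group Γ] (S : Set Γ) (hfin : S.Finite) (n : ℕ) :
    {g : Γ | ∃ w : List Γ, w.length ≤ n ∧ (∀ x ∈ w, x ∈ S ∨ x⁻¹ ∈ S) ∧ g = w.prod}.Finite := by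
  induction n with
  | zero =>
    refine Set.Finite.subset (Set.finite_singleton 1) ?_
    rintro g ⟨w, hlen, -, rfl⟩
    simp [List.length_eq_zero_iff.mp (Nat.le_zero.mp hlen)]
  | succ n ih =>
    have hS' : {x : Γ | x ∈ S ∨ x⁻¹ ∈ S}.Finite := by
      have : {x : Γ | x ∈ S ∨ x⁻¹ ∈ S} = S ∪ (Inv.inv ⁻¹' S) := rfl
      rw [this]
      exact hfin.union (hfin.preimage inv_injective.injOn)
    refine Set.Finite.subset
      ((Set.finite_singleton (1 : Γ)).union (hS'.image2 (· * ·) ih)) ?_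
    rintro g ⟨w, hlen, hx, rfl⟩
    cases w with
    | nil => simp
    | cons a t =>
      right
      refine ⟨a, hx a List.mem_cons_self, t.prod,
        ⟨t, by simpa using Nat.succ_le_succ_iff.mp hlen,
          fun x hx' => hx x (List.mem_cons.2 (Or.inr hx')), rfl⟩, by simp⟩

lemma stmt16_ball_finite {Γ : Type*} [Group Γ] [MetricSpace Γ] (S : Set Γ)
    (hfin : S.Finite) (hclos : Subgroup.closure S = ⊤)
    (hdist : ∀ g h : Γ, dist g h = sInf {t : ℝ | ∃ w : List Γ,
      (w.length : ℝ) = t ∧ (∀ x ∈ w, x ∈ S ∨ x⁻¹ ∈ S) ∧ g⁻¹ * h = w.prod}) (R : ℝ) :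
    {g : Γ | dist (1 : Γ) g < R}.Finite := by
  refine (stmt16_prodSet_finite S hfin ⌈R⌉₊).subset ?_
  intro g hg
  have hg' : dist (1 : Γ) g < R := hg
  -- word representation exists
  have hmem : g ∈ Submonoid.closure (S ∪ S⁻¹) := by
    rw [← Subgroup.closure_toSubmonoid]
    exact hclos ▸ Subgroup.mem_top g
  obtain ⟨l, hl, hlprod⟩ := Submonoid.exists_list_of_mem_closure hmem
  have hl' : ∀ x ∈ l, x ∈ S ∨ x⁻¹ ∈ S := by
    intro x hx
    rcases hl x hx with h | h
    · exact Or.inl h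
    · exact Or.inr (Set.mem_inv.mp h)
  set L : Set ℕ := {n : ℕ | ∃ w : List Γ, w.length = n ∧ (∀ x ∈ w, x ∈ S ∨ x⁻¹ ∈ S)
    ∧ g = w.prod} with hL
  have hLne : L.Nonempty := ⟨l.length, l, rfl, hl', hlprod.symm⟩
  have hTL : {t : ℝ | ∃ w : List Γ,
      (w.length : ℝ) = t ∧ (∀ x ∈ w, x ∈ S ∨ x⁻¹ ∈ S) ∧ (1 : Γ)⁻¹ * g = w.prod}
      = Nat.cast '' L := by
    ext t
    constructor
    · rintro ⟨w, hw1, hw2, hw3⟩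
      exact ⟨w.length, ⟨w, rfl, hw2, by simpa using hw3⟩, hw1⟩
    · rintro ⟨n, ⟨w, hw1, hw2, hw3⟩, rfl⟩
      exact ⟨w, by rw [hw1], hw2, by simpa using hw3⟩
  have hlb : ∀ t ∈ Nat.cast '' L, ((sInf L : ℕ) : ℝ) ≤ t := by
    rintro t ⟨n, hn, rfl⟩
    exact_mod_cast Nat.sInf_le hn
  have hmem' : ((sInf L : ℕ) : ℝ) ∈ Nat.cast '' L := ⟨sInf L, Nat.sInf_mem hLne, rfl⟩
  have hdg : dist (1 : Γ) g = ((sInf L : ℕ) : ℝ) := by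
    rw [hdist 1 g, hTL]
    exact le_antisymm (csInf_le ⟨_, hlb⟩ hmem') (le_csInf ⟨_, hmem'⟩ hlb)
  obtain ⟨w, hwlen, hwx, hwprod⟩ := Nat.sInf_mem hLne
  refine ⟨w, ?_, hwx, hwprod⟩
  have : ((w.length : ℕ) : ℝ) < R := by rw [hwlen, ← hdg]; exact hg'
  have : ((w.length : ℕ) : ℝ) < (⌈R⌉₊ : ℝ) := lt_of_lt_of_le this (Nat.le_ceil R)
  exact le_of_lt (by exact_mod_cast this)

/-- From a family of `r`-locally isometric affine actions whose cocycles satisfy uniform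
coarse bounds `ρ₁(d(e,g)) ≤ ‖b_r(g)‖ ≤ ρ₂(d(e,g))` for `d(e,g) < r` (and vanish
otherwise), one obtains a proper isometric affine action of `Γ` on the ultraproduct,
whose cocycle `b(g) = [(b_r(g))]` satisfies `ρ₁(d(e,g)) ≤ ‖b(g)‖`. -/
theorem stmt16 {Γ : Type*} [Group Γ] [MetricSpace Γ] (S : Set Γ) (hS : IsWordMetric S)
    (B : ℕ → Type*) [∀ r, NormedAddCommGroup (B r)] [∀ r, NormedSpace ℝ (B r)]
    (A : ∀ r : ℕ, RLocalIsomAffAction Γ (r : ℝ) (B r))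
    (ρ₁ ρ₂ : ℝ → ℝ) (hmono₁ : Monotone ρ₁) (hmono₂ : Monotone ρ₂)
    (htend₁ : Tendsto ρ₁ atTop atTop) (htend₂ : Tendsto ρ₂ atTop atTop)
    (hbounds : ∀ (g : Γ) (r : ℕ), dist (1 : Γ) g < (r : ℝ) →
      ρ₁ (dist (1 : Γ) g) ≤ ‖(A r).b g‖ ∧ ‖(A r).b g‖ ≤ ρ₂ (dist (1 : Γ) g))
    (hzero : ∀ (g : Γ) (r : ℕ), ¬ dist (1 : Γ) g < (r : ℝ) → (A r).b g = 0)
    (𝒰 : Ultrafilter ℕ) (h𝒰 : (𝒰 : Filter ℕ) ≤ cofinite)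
    (V : Type*) [NormedAddCommGroup V] [NormedSpace ℝ V] (q : boundedSeqs B →ₗ[ℝ] V)
    (hq : IsUltraproductQuotient B 𝒰 V q) :
    ∃ (π : Γ → V → V) (b : Γ → V),
      (∀ g, Isometry (π g)) ∧
      (∀ g, Function.Bijective (π g)) ∧
      (∀ g, ∀ u v : V, π g (u + v) = π g u + π g v) ∧
      (∀ g, ∀ (c : ℝ) (v : V), π g (c • v) = c • π g v) ∧
      (∀ g h, ∀ v : V, π (g * h) v = π g (π h v)) ∧
      (∀ g h, b (g * h) = π g (b h) + b g) ∧
      (∀ g : Γ, ∃ b' : boundedSeqs B,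
        (∀ r : ℕ, b'.1 r = (A r).b g) ∧ b g = q b') ∧
      (∀ g : Γ, ρ₁ (dist (1 : Γ) g) ≤ ‖b g‖) ∧
      Tendsto (fun g : Γ => ‖b g‖) cofinite atTop := by
  classical
  obtain ⟨qsurj, qnorm⟩ := hq
  obtain ⟨hSfin, hSclos, hSdist⟩ := hS
  have h𝒰' : (𝒰 : Filter ℕ) ≤ atTop := Nat.cofinite_eq_atTop ▸ h𝒰
  -- for each g, eventually r is large enough
  have hcof : ∀ g : Γ, ∀ᶠ r : ℕ in (𝒰 : Filter ℕ), dist (1 : Γ) g < (r : ℝ) := by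
    intro g
    refine h𝒰' ?_
    obtain ⟨N, hN⟩ := exists_nat_gt (dist (1 : Γ) g)
    filter_upwards [eventually_ge_atTop N] with r hr
    exact hN.trans_le (by exact_mod_cast hr)
  -- basic facts about the local actions
  have hπ0 : ∀ (g : Γ) (r : ℕ), dist (1 : Γ) g < (r : ℝ) → (A r).π g 0 = 0 := by
    intro g r h
    have h2 := (A r).map_add g h 0 0
    rw [add_zero] at h2
    exact right_eq_add.mp h2
  have hnormπ : ∀ (g : Γ) (r : ℕ) (h : dist (1 : Γ) g < (r : ℝ)) (v : B r),
      ‖(A r).π g v‖ = ‖v‖ := by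
    intro g r h v
    have := ((A r).isom g h).dist_eq v 0
    rwa [hπ0 g r h, dist_zero_right, dist_zero_right] at this
  have hdiffπ : ∀ (g : Γ) (r : ℕ) (h : dist (1 : Γ) g < (r : ℝ)) (u v : B r),
      ‖(A r).π g u - (A r).π g v‖ = ‖u - v‖ := by
    intro g r h u v
    have := ((A r).isom g h).dist_eq u v
    rwa [dist_eq_norm, dist_eq_norm] at this
  have hsubπ : ∀ (g : Γ) (r : ℕ) (h : dist (1 : Γ) g < (r : ℝ)) (u v : B r),
      (A r).π g (u - v) = (A r).π g u - (A r).π g v := by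
    intro g r h u v
    have h2 := (A r).map_add g h (u - v) v
    rw [sub_add_cancel] at h2
    exact eq_sub_of_add_eq h2.symm
  -- the shifted sequences
  set P : Γ → (boundedSeqs B) → ∀ r, B r := fun g a r =>
    if h : dist (1 : Γ) g < (r : ℝ) then (A r).π g (a.1 r) else 0 with hP
  have hPmem : ∀ g a, P g a ∈ boundedSeqs B := by
    rintro g ⟨a, K, hK⟩
    refine ⟨max K 0, fun r => ?_⟩
    simp only [hP]
    split
    · rename_i h
      rw [hnormπ g r h]
      exact le_max_of_le_left (hK r)
    · simp
  set Pb : Γ → boundedSeqs B → boundedSeqs B := fun g a => ⟨P g a, hPmem g a⟩ with hPb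
  have hPbsub : ∀ g x y, Pb g (x - y) = Pb g x - Pb g y := by
    intro g x y
    apply Subtype.ext
    funext r
    show P g (x - y) r = P g x r - P g y r
    simp only [hP]
    split
    · rename_i h
      rw [show (x - y).1 r = x.1 r - y.1 r from rfl, hsubπ g r h]
    · simp
  have hPbadd : ∀ g x y, Pb g (x + y) = Pb g x + Pb g y := by
    intro g x y
    apply Subtype.ext
    funext r
    show P g (x + y) r = P g x r + P g y r
    simp only [hP]
    split
    · rename_i h
      rw [show (x + y).1 r = x.1 r + y.1 r from rfl, (A r).map_add g h]
    · simp
  have hPbsmul : ∀ g (c : ℝ) x, Pb g (c • x) = c • Pb g x := by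
    intro g c x
    apply Subtype.ext
    funext r
    show P g (c • x) r = c • P g x r
    simp only [hP]
    split
    · rename_i h
      rw [show (c • x).1 r = c • x.1 r from rfl, (A r).map_smul g h]
    · simp
  -- norm of q of Pb
  have hqnormP : ∀ g (a : boundedSeqs B), ‖q (Pb g a)‖ = ‖q a‖ := by
    intro g a
    refine tendsto_nhds_unique (qnorm (Pb g a)) ?_
    refine (qnorm a).congr' ?_
    filter_upwards [hcof g] with r hr
    show ‖a.1 r‖ = ‖P g a r‖
    simp only [hP]
    rw [dif_pos hr, hnormπ g r hr]
  -- q respects q-equality under Pb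
  have hqP : ∀ g (x y : boundedSeqs B), q x = q y → q (Pb g x) = q (Pb g y) := by
    intro g x y hxy
    have h0 : Tendsto (fun r => ‖(Pb g x - Pb g y).1 r‖) (𝒰 : Filter ℕ) (nhds 0) := by
      rw [← hPbsub]
      have := hqnormP g (x - y)
      rw [map_sub, hxy, sub_self, norm_zero] at this
      rw [← this]
      exact qnorm (Pb g (x - y))
    have h1 := tendsto_nhds_unique (qnorm (Pb g x - Pb g y)) h0
    have h2 : q (Pb g x - Pb g y) = 0 := norm_eq_zero.mp h1
    rw [map_sub] at h2
    exact sub_eq_zero.mp h2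
  -- q of eventually-equal sequences agree
  have hqcongr : ∀ x y : boundedSeqs B,
      (∀ᶠ r in (𝒰 : Filter ℕ), x.1 r = y.1 r) → q x = q y := by
    intro x y h
    have h0 : Tendsto (fun r => ‖(x - y).1 r‖) (𝒰 : Filter ℕ) (nhds 0) := by
      refine Tendsto.congr' ?_ tendsto_const_nhds
      filter_upwards [h] with r hr
      show (0 : ℝ) = ‖x.1 r - y.1 r‖
      rw [hr, sub_self, norm_zero]
    have h1 := tendsto_nhds_unique (qnorm (x - y)) h0
    have h2 : q (x - y) = 0 := norm_eq_zero.mp h1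
    rw [map_sub] at h2
    exact sub_eq_zero.mp h2
  -- lift
  set lift : V → boundedSeqs B := fun v => (qsurj v).choose with hliftdef
  have hlift : ∀ v, q (lift v) = v := fun v => (qsurj v).choose_spec
  -- definitions
  set π : Γ → V → V := fun g v => q (Pb g (lift v)) with hπdef
  have hπwd : ∀ g (a : boundedSeqs B), π g (q a) = q (Pb g a) := by
    intro g a
    exact hqP g (lift (q a)) a (hlift (q a))
  set bs : Γ → boundedSeqs B := fun g =>
    ⟨fun r => (A r).b g, max (ρ₂ (dist (1 : Γ) g)) 0, by
      intro r
      show ‖(A r).b g‖ ≤ max (ρ₂ (dist (1 : Γ) g)) 0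
      by_cases h : dist (1 : Γ) g < (r : ℝ)
      · exact le_max_of_le_left (hbounds g r h).2
      · rw [hzero g r h, norm_zero]
        exact le_max_right _ _⟩ with hbs
  set b : Γ → V := fun g => q (bs g) with hb
  -- multiplicativity on V
  have hmulV : ∀ g h : Γ, ∀ v : V, π (g * h) v = π g (π h v) := by
    intro g h v
    rw [show π h v = q (Pb h (lift v)) from rfl, hπwd g (Pb h (lift v))]
    refine hqcongr _ _ ?_
    filter_upwards [hcof g, hcof h, hcof (g * h)] with r hrg hrh hrgh
    show P (g * h) (lift v) r = P g (Pb h (lift v)) r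
    simp only [hP]
    rw [dif_pos hrgh, dif_pos hrg]
    show (A r).π (g * h) ((lift v).1 r) = (A r).π g (P h (lift v) r)
    simp only [hP]
    rw [dif_pos hrh]
    exact (A r).mul g h hrg hrh hrgh _
  -- identity
  have honeV : ∀ v : V, π 1 v = v := by
    intro v
    rw [show π 1 v = q (Pb 1 (lift v)) from rfl]
    conv_rhs => rw [← hlift v]
    refine hqcongr _ _ ?_
    filter_upwards [hcof 1] with r hr
    show P 1 (lift v) r = (lift v).1 r
    simp only [hP]
    rw [dif_pos hr]
    set w := (lift v).1 r
    have h2 := (A r).mul 1 1 hr hr (by simpa using hr) w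
    rw [one_mul] at h2
    exact (((A r).bij 1 hr).1 h2).symm
  -- isometry
  have hisom : ∀ g, Isometry (π g) := by
    intro g
    refine Isometry.of_dist_eq fun u v => ?_
    rw [dist_eq_norm, dist_eq_norm]
    have : π g u - π g v = q (Pb g (lift u - lift v)) := by
      rw [hPbsub, map_sub]
    rw [this, hqnormP g (lift u - lift v), map_sub, hlift, hlift]
  refine ⟨π, b, hisom, ?_, ?_, ?_, hmulV, ?_, ?_, ?_, ?_⟩
  · -- bijective
    intro g
    refine Function.bijective_iff_has_inverse.mpr ⟨π g⁻¹, fun v => ?_, fun v => ?_⟩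
    · rw [← hmulV g⁻¹ g v, inv_mul_cancel, honeV]
    · rw [← hmulV g g⁻¹ v, mul_inv_cancel, honeV]
  · -- additive
    intro g u v
    have huv : u + v = q (lift u + lift v) := by rw [map_add, hlift, hlift]
    rw [huv, hπwd, hPbadd, map_add, ← hπwd, ← hπwd, hlift, hlift]
  · -- smul
    intro g c v
    have hcv : c • v = q (c • lift v) := by rw [map_smul, hlift]
    rw [hcv, hπwd, hPbsmul, map_smul, ← hπwd, hlift]
  · -- cocycle
    intro g h
    rw [show b h = q (bs h) from rfl, hπwd g (bs h)]
    rw [show b (g * h) = q (bs (g * h)) from rfl, show b g = q (bs g) from rfl, ← map_add]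
    refine hqcongr _ _ ?_
    filter_upwards [hcof g, hcof h, hcof (g * h)] with r hrg hrh hrgh
    show (A r).b (g * h) = (Pb g (bs h) + bs g).1 r
    rw [show (Pb g (bs h) + bs g).1 r = P g (bs h) r + (A r).b g from rfl]
    simp only [hP]
    rw [dif_pos hrg]
    exact (A r).cocycle g h hrg hrh hrgh
  · -- representation of b
    intro g
    exact ⟨bs g, fun r => rfl, rfl⟩
  · -- lower bound
    intro g
    refine ge_of_tendsto (qnorm (bs g)) ?_
    filter_upwards [hcof g] with r hr
    exact (hbounds g r hr).1
  · -- properness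
    rw [tendsto_atTop]
    intro M
    obtain ⟨R, hR⟩ := (tendsto_atTop.mp htend₁ M).exists_forall_of_atTop
    have hball := stmt16_ball_finite S hSfin hSclos hSdist R
    filter_upwards [hball.compl_mem_cofinite] with g hg
    have hdge : R ≤ dist (1 : Γ) g := not_lt.mp hg
    calc M ≤ ρ₁ (dist (1 : Γ) g) := hR _ hdge
    _ ≤ ‖b g‖ := by
      refine ge_of_tendsto (qnorm (bs g)) ?_
      filter_upwards [hcof g] with r hr
      exact (hbounds g r hr).1
end

section
/- Let Γ be a finitely generated group with word metric d and fix r > 0. Suppose π : Γ → X is a group homomorphism onto a finite group X with word metric, which is r-isometric on balls (restriction to any subset of diameter < r in Γ is an isometry onto its image). If τ is an r-locally isometric representation of X on a Banach space W (where X carries its own metric) and β is an r-locally cocycle for τ, then σ := τ ∘ π extended by Id outside the r-ball of Γ, and b := β ∘ π extended by 0 outside the r-ball of Γ, form an r-locally isometric representation of Γ on W and an r-locally cocycle with respect to σ. -/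
/-- Lifting an `r`-locally isometric affine action through an `r`-isometric quotient map:
if `φ : Γ → X` is a surjective homomorphism onto a finite group which restricts to an
isometry on every subset of `Γ` of diameter `< r`, and `(τ, β)` is an `r`-locally
isometric affine action of `X` on `W`, then `σ = τ ∘ φ` (extended by the identity outside
the `r`-ball) and `b = β ∘ φ` (extended by `0`) form an `r`-locally isometric affine
action of `Γ` on `W`. -/
theorem stmt19 {Γ : Type*} [Group Γ] [MetricSpace Γ] (S : Set Γ) (hS : IsWordMetric S)
    {X : Type*} [Group X] [Fintype X] [MetricSpace X]
    (φ : Γ →* X) (hsurj : Function.Surjective φ) (r : ℝ)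
    (hiso : ∀ Y : Set Γ, Metric.diam Y < r → ∀ g ∈ Y, ∀ h ∈ Y, dist (φ g) (φ h) = dist g h)
    {W : Type*} [NormedAddCommGroup W] [NormedSpace ℝ W]
    (A₀ : RLocalIsomAffAction X r W)
    (σ : Γ → W → W) (b : Γ → W)
    (hσ : ∀ g : Γ, σ g = if dist (1 : Γ) g < r then A₀.π (φ g) else id)
    (hb : ∀ g : Γ, b g = if dist (1 : Γ) g < r then A₀.b (φ g) else 0) :
    ∃ A : RLocalIsomAffAction Γ r W, A.π = σ ∧ A.b = b := by
  have hd : ∀ g : Γ, dist (1 : Γ) g < r → dist (1 : X) (φ g) < r := by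
    intro g hg
    have hdiam : Metric.diam ({1, g} : Set Γ) < r := by
      rwa [Metric.diam_pair]
    have := hiso {1, g} hdiam 1 (by simp) g (by simp)
    rw [map_one] at this
    rwa [this]
  have hσ' : ∀ g : Γ, dist (1 : Γ) g < r → σ g = A₀.π (φ g) := fun g hg => by
    rw [hσ g, if_pos hg]
  have hb' : ∀ g : Γ, dist (1 : Γ) g < r → b g = A₀.b (φ g) := fun g hg => by
    rw [hb g, if_pos hg]
  refine ⟨⟨σ, b, ?_, ?_, ?_, ?_, ?_, ?_⟩, rfl, rfl⟩
  · intro g hg; rw [hσ' g hg]; exact A₀.isom (φ g) (hd g hg)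
  · intro g hg; rw [hσ' g hg]; exact A₀.bij (φ g) (hd g hg)
  · intro g hg; rw [hσ' g hg]; exact A₀.map_add (φ g) (hd g hg)
  · intro g hg; rw [hσ' g hg]; exact A₀.map_smul (φ g) (hd g hg)
  · intro g h hg hh hgh v
    rw [hσ' g hg, hσ' h hh, hσ' (g * h) hgh, map_mul]
    exact A₀.mul (φ g) (φ h) (hd g hg) (hd h hh) (by rw [← map_mul]; exact hd _ hgh) v
  · intro g h hg hh hgh
    rw [hσ' g hg, hb' h hh, hb' g hg, hb' (g * h) hgh, map_mul]
    exact A₀.cocycle (φ g) (φ h) (hd g hg) (hd h hh) (by rw [← map_mul]; exact hd _ hgh)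
end
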